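/- In H_{1,n}(q) (n ≥ 1), the powers {t^k : k ∈ ℤ} of the looping generator t are linearly independent over R; in particular t satisfies no polynomial relation and H_{1,n}(q) is an infinite-dimensional R-module. -/

import Mathlib

set_option synthInstance.maxHeartbeats 1000000
set_option maxHeartbeats 2000000

namespace MB

/-! ## The mixed braid group `B_{1,n}` (with `m = n - 1` braiding generators) -/

/-- Generators: `none` is the looping generator `t`, `some i` is `σ_{i+1}` for `i : Fin m`. -/
abbrev MBGen (m : ℕ) := Option (Fin m)

/-- The relators of the mixed braid group `B_{1,n}` (`m = n-1`):
`σ₁tσ₁t = tσ₁tσ₁`; `tσ_i = σ_i t` for `i > 1`; the braid relations among the `σ_i`. -/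
def rels (m : ℕ) : Set (FreeGroup (MBGen m)) :=
  { r | (∃ h : 0 < m,
          r = (FreeGroup.of (some ⟨0, h⟩) * FreeGroup.of none) ^ 2 *
              ((FreeGroup.of (none : MBGen m) * FreeGroup.of (some ⟨0, h⟩)) ^ 2)⁻¹) ∨
        (∃ i : Fin m, 1 ≤ (i : ℕ) ∧
          r = FreeGroup.of (none : MBGen m) * FreeGroup.of (some i) *
              (FreeGroup.of (some i) * FreeGroup.of (none : MBGen m))⁻¹) ∨
        (∃ i j : Fin m, (i : ℕ) + 1 = (j : ℕ) ∧
          r = FreeGroup.of (some i) * FreeGroup.of (some j) * FreeGroup.of (some i) *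
              (FreeGroup.of (some j) * FreeGroup.of (some i) * FreeGroup.of (some j))⁻¹) ∨
        (∃ i j : Fin m, (i : ℕ) + 1 < (j : ℕ) ∧
          r = FreeGroup.of (some i) * FreeGroup.of (some j) *
              (FreeGroup.of (some j) * FreeGroup.of (some i))⁻¹) }

/-- The mixed braid group `B_{1,n}` with `n = m+1` moving strands. -/
abbrev B (m : ℕ) := PresentedGroup (rels m)

/-- The braiding generator `σ_{i+1}`, for `i : Fin m`. -/
def σ {m : ℕ} (i : Fin m) : B m := PresentedGroup.of (some i)

/-- The looping generator `t`. -/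
def τ {m : ℕ} : B m := PresentedGroup.of none

/-- `σ_j` in one-based indexing (`1 ≤ j ≤ m`), junk value `1` out of range. -/
def sig {m : ℕ} (j : ℕ) : B m :=
  if h : 1 ≤ j ∧ j - 1 < m then σ ⟨j - 1, h.2⟩ else 1

/-- The looping elements `t_i = σ_i ⋯ σ_1 t σ_1 ⋯ σ_i` (for `0 ≤ i ≤ m`), via `t_0 = t`,
`t_{j+1} = σ_{j+1} t_j σ_{j+1}`. -/
def tt {m : ℕ} : ℕ → B m
  | 0 => τ
  | (j+1) => sig (j+1) * tt j * sig (j+1)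

/-- The looping elements `t′_i = σ_i ⋯ σ_1 t σ_1⁻¹ ⋯ σ_i⁻¹` (for `0 ≤ i ≤ m`), via `t′_0 = t`,
`t′_{j+1} = σ_{j+1} t′_j σ_{j+1}⁻¹`. -/
def tp {m : ℕ} : ℕ → B m
  | 0 => τ
  | (j+1) => sig (j+1) * tp j * (sig (j+1))⁻¹

/-! ## The generalized Iwahori–Hecke algebra of type B, `H_{1,n}(q)` -/

/-- The ground ring `R = ℂ[q^{±1}]` of Laurent polynomials. -/
abbrev R : Type := LaurentPolynomial ℂ

instance : IsDomain R := NoZeroDivisors.to_isDomain _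

/-- The variable `q ∈ R`. -/
noncomputable def qq : R := LaurentPolynomial.T 1

/-- The quadratic Hecke relations `σ_i² = (q-1)σ_i + q`. -/
inductive heckeRel (m : ℕ) :
    MonoidAlgebra R (B m) → MonoidAlgebra R (B m) → Prop
  | quad (i : Fin m) : heckeRel m
      (MonoidAlgebra.of R (B m) (σ i) * MonoidAlgebra.of R (B m) (σ i))
      ((qq - 1) • MonoidAlgebra.of R (B m) (σ i) + qq • (1 : MonoidAlgebra R (B m)))

/-- The generalized Iwahori–Hecke algebra of type B, `H_{1,n}(q)` (`n = m+1`), as the quotient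
of the group algebra `R[B_{1,n}]` by the two-sided ideal generated by the quadratic relations. -/
abbrev H (m : ℕ) := RingQuot (heckeRel m)

/-- The canonical multiplicative map `π : B_{1,n} → H_{1,n}(q)`. -/
noncomputable def pih (m : ℕ) : B m →* H m :=
  (RingQuot.mkRingHom (heckeRel m)).toMonoidHom.comp (MonoidAlgebra.of R (B m))

/-- The subalgebra `H_n(q)` of `H_{1,n}(q)` generated by the images `g_1, …, g_{n-1}`
of `σ_1, …, σ_{n-1}`. -/
noncomputable def HA (m : ℕ) : Subalgebra R (H m) :=
  Algebra.adjoin R (Set.range fun i : Fin m => pih m (σ i))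

/-! ## Auxiliary: an algebra map `H m → R[ℤ]` sending `σ_i ↦ -1`, `t ↦ z`. -/

/-- The target algebra `R[z^{±1}]`, the group algebra of `ℤ` over `R`. -/
noncomputable abbrev AA : Type := MonoidAlgebra R (Multiplicative ℤ)

/-- Group elements as units of the group algebra. -/
noncomputable def uof : Multiplicative ℤ →* AAˣ :=
  (Units.map (MonoidAlgebra.of R (Multiplicative ℤ))).comp
    (toUnits : Multiplicative ℤ ≃* (Multiplicative ℤ)ˣ).toMonoidHom

/-- The assignment on generators: `t ↦ z`, `σ_i ↦ -1`. -/
noncomputable def fgen (m : ℕ) : MBGen m → AAˣ :=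
  fun x => match x with
  | none => uof (Multiplicative.ofAdd 1)
  | some _ => -1

theorem neg_one_comm_AA (v : AAˣ) : -1 * v = v * -1 :=
  Units.ext (by simp [Units.val_mul, Units.val_neg, Units.val_one])

theorem fgen_rels (m : ℕ) : ∀ r ∈ rels m, FreeGroup.lift (fgen m) r = 1 := by
  rintro r (⟨h, rfl⟩ | ⟨i, hi, rfl⟩ | ⟨i, j, hij, rfl⟩ | ⟨i, j, hij, rfl⟩) <;>
      simp only [map_mul, map_pow, map_inv, FreeGroup.lift_apply_of, fgen] <;>
    first
      | (rw [neg_one_comm_AA]; group)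
      | group

/-- The group homomorphism `B m →* AAˣ`. -/
noncomputable def phiB (m : ℕ) : B m →* AAˣ := PresentedGroup.toGroup (fgen_rels m)

/-- The monoid homomorphism `B m →* AA`. -/
noncomputable def psiB (m : ℕ) : B m →* AA := (Units.coeHom AA).comp (phiB m)

/-- The induced algebra homomorphism on the group algebra. -/
noncomputable def PhiB (m : ℕ) : MonoidAlgebra R (B m) →ₐ[R] AA :=
  MonoidAlgebra.lift R AA (B m) (psiB m)

theorem psiB_sigma (m : ℕ) (i : Fin m) : psiB m (σ i) = -1 := by
  simp [psiB, phiB, σ, PresentedGroup.toGroup.of, fgen]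

theorem PhiB_rel (m : ℕ) : ∀ ⦃x y⦄, heckeRel m x y → PhiB m x = PhiB m y := by
  rintro x y ⟨i⟩
  simp only [map_mul, map_add, map_smul, PhiB, MonoidAlgebra.lift_of, psiB_sigma,
    map_one, map_smul]
  rw [Algebra.smul_def, Algebra.smul_def, map_sub, map_one]
  ring

/-- The induced algebra homomorphism `H m →ₐ[R] AA`. -/
noncomputable def PsiH (m : ℕ) : H m →ₐ[R] AA :=
  RingQuot.liftAlgHom R ⟨PhiB m, PhiB_rel m⟩

theorem PsiH_pih (m : ℕ) (g : B m) : PsiH m (pih m g) = psiB m g := by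
  have h1 : pih m g = RingQuot.mkAlgHom R (heckeRel m) (MonoidAlgebra.of R (B m) g) := by
    show RingQuot.mkRingHom (heckeRel m) (MonoidAlgebra.of R (B m) g) = _
    rw [← RingQuot.mkAlgHom_coe R (heckeRel m)]
    rfl
  rw [h1, PsiH, RingQuot.liftAlgHom_mkAlgHom_apply, PhiB, MonoidAlgebra.lift_of]

theorem PsiH_t_pow (m : ℕ) (k : ℤ) :
    PsiH m (pih m (τ ^ k)) = MonoidAlgebra.of R (Multiplicative ℤ) (Multiplicative.ofAdd k) := by
  rw [PsiH_pih]
  have h0 : phiB m τ = uof (Multiplicative.ofAdd 1) := by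
    simp [phiB, τ, PresentedGroup.toGroup.of, fgen]
  have h1 : phiB m (τ ^ k) = uof (Multiplicative.ofAdd k) := by
    rw [map_zpow, h0, ← map_zpow]
    congr 1
    rw [← ofAdd_zsmul]
    norm_num
  show ((phiB m (τ ^ k) : AAˣ) : AA) = _
  rw [h1]
  simp [uof]

theorem of_ofAdd_linearIndependent :
    LinearIndependent R
      (fun k : ℤ => (MonoidAlgebra.of R (Multiplicative ℤ) (Multiplicative.ofAdd k) : AA)) := by
  have h := (MonoidAlgebra.basis (Multiplicative ℤ) R).linearIndependent
  have h2 := h.comp (fun k : ℤ => Multiplicative.ofAdd k) (fun a b hab => by simpa using hab)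
  simpa [Function.comp_def, MonoidAlgebra.of_apply, Finsupp.coe_basisSingleOne] using h2

theorem li_of_comp {ι S M M' : Type*} [Semiring S] [AddCommMonoid M] [AddCommMonoid M']
    [Module S M] [Module S M'] {v : ι → M} (f : M →ₗ[S] M')
    (h : LinearIndependent S (⇑f ∘ v)) : LinearIndependent S v := by
  intro x y hxy
  apply h
  rw [Finsupp.linearCombination_linear_comp, LinearMap.coe_comp, Function.comp_apply,
    Function.comp_apply, hxy]

/-- `PsiH` as an `R`-linear map, with instances matching the ambient statement. -/
noncomputable def PsiL (m : ℕ) : H m →ₗ[R] AA where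
  toFun := PsiH m
  map_add' x y := map_add (PsiH m) x y
  map_smul' r x := by simpa using map_smul (PsiH m) r x

theorem hli_aux (m : ℕ) : LinearIndependent R (fun k : ℤ => pih m (τ ^ k)) := by
  have heq : (⇑(PsiL m) ∘ fun k : ℤ => pih m (τ ^ k)) =
      fun k : ℤ => (MonoidAlgebra.of R (Multiplicative ℤ) (Multiplicative.ofAdd k) : AA) := by
    funext k
    show PsiH m (pih m (τ ^ k)) = _
    exact PsiH_t_pow m k
  have h3 : LinearIndependent R (⇑(PsiL m) ∘ fun k : ℤ => pih m (τ ^ k)) := by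
    rw [heq]; exact of_ofAdd_linearIndependent
  exact li_of_comp (PsiL m) h3

theorem notfin_aux (m : ℕ) : ¬ Module.Finite R (H m) := fun hfin =>
  Module.Finite.not_linearIndependent_of_infinite (fun k : ℤ => pih m (τ ^ k)) (hli_aux m)

/-- In `H_{1,n}(q)` the powers `t^k`, `k ∈ ℤ`, are linearly independent
over `R`; in particular `t` satisfies no polynomial relation and `H_{1,n}(q)` is an
infinite-dimensional `R`-module. -/
theorem t_powers_linearIndependent (m : ℕ) :
    LinearIndependent R (fun k : ℤ => pih m (τ ^ k)) ∧ ¬ Module.Finite R (H m) :=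
  ⟨hli_aux m, notfin_aux m⟩

end MB
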